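/- With M_n nonsingular and M_{n-1} nonsingular, the matrix L(𝐏̂_n 𝐏̂_n^T) equals the Schur complement M_{n,n} − M_{n-1,n}^T M_{n-1}^{-1} M_{n-1,n}, and this matrix is symmetric and nonsingular. -/

import Mathlib

open MvPolynomial Matrix Finset

/-- Multi-indices in `d` variables of total degree exactly `m`. -/
abbrev ExactDeg (d m : ℕ) := {α : Fin d → Fin (m + 1) // ∑ i, (α i : ℕ) = m}

/-- Multi-indices in `d` variables of total degree at most `m`. -/
abbrev DegLE (d m : ℕ) := {α : Fin d → Fin (m + 1) // ∑ i, (α i : ℕ) ≤ m}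

/-- The monomial `x^α`. -/
noncomputable def xpow {d : ℕ} (α : Fin d → ℕ) : MvPolynomial (Fin d) ℝ :=
  ∏ i, X i ^ α i

/-- The moment matrix `M_m = [μ_{α+β} : |α|,|β| ≤ m]`. -/
noncomputable def momentMat {d : ℕ} (L : MvPolynomial (Fin d) ℝ →ₗ[ℝ] ℝ) (m : ℕ) :
    Matrix (DegLE d m) (DegLE d m) ℝ :=
  Matrix.of fun a b =>
    L (xpow (fun i => (a.1 i : ℕ)) * xpow (fun i => (b.1 i : ℕ)))

/-- The block `M_{m,m+1} = [μ_{α+β} : |α| ≤ m, |β| = m+1]`. -/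
noncomputable def crossMat {d : ℕ} (L : MvPolynomial (Fin d) ℝ →ₗ[ℝ] ℝ) (m : ℕ) :
    Matrix (DegLE d m) (ExactDeg d (m + 1)) ℝ :=
  Matrix.of fun a b =>
    L (xpow (fun i => (a.1 i : ℕ)) * xpow (fun i => (b.1 i : ℕ)))

/-- The block `M_{m+1,m+1} = [μ_{α+β} : |α| = |β| = m+1]`. -/
noncomputable def topMat {d : ℕ} (L : MvPolynomial (Fin d) ℝ →ₗ[ℝ] ℝ) (m : ℕ) :
    Matrix (ExactDeg d (m + 1)) (ExactDeg d (m + 1)) ℝ :=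
  Matrix.of fun a b =>
    L (xpow (fun i => (a.1 i : ℕ)) * xpow (fun i => (b.1 i : ℕ)))

/-- The monic orthogonal polynomial `P_β = x^β - ∑_γ (M_n⁻¹ M_{n,n+1})_{γβ} x^γ`. -/
noncomputable def monicOP {d : ℕ} (L : MvPolynomial (Fin d) ℝ →ₗ[ℝ] ℝ) (n : ℕ)
    (β : ExactDeg d (n + 1)) : MvPolynomial (Fin d) ℝ :=
  xpow (fun i => (β.1 i : ℕ)) -
    ∑ γ : DegLE d n, ((momentMat L n)⁻¹ * crossMat L n) γ β • xpow (fun i => (γ.1 i : ℕ))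

/-- The Gram matrix `L(𝐏̂_{n+1} 𝐏̂_{n+1}ᵀ)` of the monic orthogonal polynomials of degree `n+1`
equals the Schur complement `M_{n+1,n+1} - M_{n,n+1}ᵀ M_n⁻¹ M_{n,n+1}`, and this matrix is
symmetric and nonsingular. -/
lemma momentMat_symm {d : ℕ} (L : MvPolynomial (Fin d) ℝ →ₗ[ℝ] ℝ) (m : ℕ) :
    (momentMat L m)ᵀ = momentMat L m := by
  ext a b; simp [momentMat, mul_comm]

set_option maxHeartbeats 1000000 in
lemma gram_entry {d : ℕ} (L : MvPolynomial (Fin d) ℝ →ₗ[ℝ] ℝ) (n : ℕ)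
    (b b' : ExactDeg d (n + 1)) :
    L (monicOP L n b * monicOP L n b') =
      topMat L n b b'
      - ((crossMat L n)ᵀ * ((momentMat L n)⁻¹ * crossMat L n)) b b'
      - (((momentMat L n)⁻¹ * crossMat L n)ᵀ * crossMat L n) b b'
      + (((momentMat L n)⁻¹ * crossMat L n)ᵀ * momentMat L n *
          ((momentMat L n)⁻¹ * crossMat L n)) b b' := by
  set A := (momentMat L n)⁻¹ * crossMat L n with hA
  have hexp : monicOP L n b * monicOP L n b' =
      xpow (fun i => (b.1 i : ℕ)) * xpow (fun i => (b'.1 i : ℕ))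
      - ∑ γ : DegLE d n, A γ b' • (xpow (fun i => (b.1 i : ℕ)) * xpow (fun i => (γ.1 i : ℕ)))
      - ∑ γ : DegLE d n, A γ b • (xpow (fun i => (γ.1 i : ℕ)) * xpow (fun i => (b'.1 i : ℕ)))
      + ∑ γ : DegLE d n, ∑ γ' : DegLE d n,
          (A γ b * A γ' b') • (xpow (fun i => (γ.1 i : ℕ)) * xpow (fun i => (γ'.1 i : ℕ))) := by
    have key : ∀ x s x' s' : MvPolynomial (Fin d) ℝ,
        (x - s) * (x' - s') = x * x' - x * s' - s * x' + s * s' := by intros; ring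
    rw [monicOP, monicOP, key]
    congr 1
    · congr 1
      · congr 1
        rw [Finset.mul_sum]
        exact Finset.sum_congr rfl fun γ _ => mul_smul_comm _ _ _
      · rw [Finset.sum_mul]
        exact Finset.sum_congr rfl fun γ _ => by rw [smul_mul_assoc]
    · rw [Finset.sum_mul]
      refine Finset.sum_congr rfl fun γ _ => ?_
      rw [smul_mul_assoc, Finset.mul_sum, Finset.smul_sum]
      refine Finset.sum_congr rfl fun γ' _ => ?_
      rw [mul_smul_comm, smul_smul]
  rw [hexp]
  simp only [map_add, map_sub, map_sum, _root_.map_smul, smul_eq_mul]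
  have h1 : L (xpow (fun i => (b.1 i : ℕ)) * xpow (fun i => (b'.1 i : ℕ))) = topMat L n b b' := rfl
  have h2 : ∑ x : DegLE d n, A x b' * L (xpow (fun i => (b.1 i : ℕ)) * xpow (fun i => (x.1 i : ℕ)))
      = ((crossMat L n)ᵀ * A) b b' := by
    rw [Matrix.mul_apply]
    refine Finset.sum_congr rfl fun x _ => ?_
    rw [Matrix.transpose_apply, mul_comm]
    congr 1
    simp only [crossMat, Matrix.of_apply]
    rw [mul_comm]
  have h3 : ∑ x : DegLE d n, A x b * L (xpow (fun i => (x.1 i : ℕ)) * xpow (fun i => (b'.1 i : ℕ)))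
      = (Aᵀ * crossMat L n) b b' := by
    rw [Matrix.mul_apply]
    refine Finset.sum_congr rfl fun x _ => ?_
    rw [Matrix.transpose_apply]
    simp only [crossMat, Matrix.of_apply]
  have h4 : ∑ x : DegLE d n, ∑ x' : DegLE d n,
      A x b * A x' b' * L (xpow (fun i => (x.1 i : ℕ)) * xpow (fun i => (x'.1 i : ℕ)))
      = (Aᵀ * momentMat L n * A) b b' := by
    rw [Matrix.mul_apply, Finset.sum_comm]
    refine Finset.sum_congr rfl fun x' _ => ?_
    rw [Matrix.mul_apply, Finset.sum_mul]
    refine Finset.sum_congr rfl fun x _ => ?_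
    rw [Matrix.transpose_apply]
    simp only [momentMat, Matrix.of_apply]
    ring
  rw [h1, h2, h3, h4]

/-- Splitting multi-indices of degree ≤ n+1 into degree ≤ n and degree = n+1. -/
def splitEquiv (d n : ℕ) : DegLE d n ⊕ ExactDeg d (n + 1) ≃ DegLE d (n + 1) where
  toFun x := x.elim
    (fun a => ⟨fun i => (a.1 i).castSucc, by
      simpa using a.2.trans (Nat.le_succ n)⟩)
    (fun b => ⟨b.1, le_of_eq b.2⟩)
  invFun c :=
    if h : ∑ i, (c.1 i : ℕ) ≤ n then
      Sum.inl ⟨fun i => ⟨(c.1 i : ℕ), by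
        have h1 : (c.1 i : ℕ) ≤ ∑ j, (c.1 j : ℕ) :=
          Finset.single_le_sum (f := fun j => (c.1 j : ℕ))
            (fun j _ => Nat.zero_le _) (Finset.mem_univ i)
        exact Nat.lt_succ_of_le (h1.trans h)⟩, by simpa using h⟩
    else Sum.inr ⟨c.1, by have := c.2; omega⟩
  left_inv x := by
    cases x with
    | inl a =>
        have hs : ∑ i, (((a.1 i).castSucc : Fin (n + 2)) : ℕ) ≤ n := by
          simpa using a.2
        dsimp only [Sum.elim_inl]; rw [dif_pos hs]
        exact congrArg Sum.inl (Subtype.ext (funext fun i => Fin.ext (by simp)))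
    | inr b =>
        have hs : ¬ (∑ i, (b.1 i : ℕ) ≤ n) := by
          rw [b.2]; omega
        dsimp only [Sum.elim_inr]; rw [dif_neg hs]
  right_inv c := by
    by_cases h : ∑ i, (c.1 i : ℕ) ≤ n
    · simp only [dif_pos h, Sum.elim_inl]
      exact Subtype.ext (funext fun i => Fin.ext (by simp))
    · simp only [dif_neg h, Sum.elim_inr]

lemma blocks_eq {d : ℕ} (L : MvPolynomial (Fin d) ℝ →ₗ[ℝ] ℝ) (n : ℕ) :
    (momentMat L (n + 1)).submatrix (splitEquiv d n) (splitEquiv d n) =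
      Matrix.fromBlocks (momentMat L n) (crossMat L n) (crossMat L n)ᵀ (topMat L n) := by
  ext x y
  cases x <;> cases y <;>
    simp [momentMat, crossMat, topMat, splitEquiv, Matrix.fromBlocks, mul_comm]

theorem gram_eq_schurComplement
    (d n : ℕ) (L : MvPolynomial (Fin d) ℝ →ₗ[ℝ] ℝ)
    (hdef : ∀ m : ℕ, IsUnit (momentMat L m).det) :
    (Matrix.of fun b b' : ExactDeg d (n + 1) => L (monicOP L n b * monicOP L n b')) =
        topMat L n - (crossMat L n)ᵀ * (momentMat L n)⁻¹ * crossMat L n ∧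
    (Matrix.of fun b b' : ExactDeg d (n + 1) => L (monicOP L n b * monicOP L n b')).IsSymm ∧
    IsUnit (Matrix.of fun b b' : ExactDeg d (n + 1) => L (monicOP L n b * monicOP L n b')).det := by
  set A := (momentMat L n)⁻¹ * crossMat L n with hA
  have hgram : (Matrix.of fun b b' : ExactDeg d (n + 1) => L (monicOP L n b * monicOP L n b')) =
      topMat L n - (crossMat L n)ᵀ * A - Aᵀ * crossMat L n
        + Aᵀ * momentMat L n * A := by
    ext b b'
    simp only [Matrix.of_apply, Matrix.sub_apply, Matrix.add_apply]
    exact gram_entry L n b b'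
  have hAt : Aᵀ = (crossMat L n)ᵀ * (momentMat L n)⁻¹ := by
    rw [hA, Matrix.transpose_mul, Matrix.transpose_nonsing_inv, momentMat_symm]
  have hMA : momentMat L n * A = crossMat L n := by
    rw [hA, Matrix.mul_nonsing_inv_cancel_left _ _ (hdef n)]
  have hCA : (crossMat L n)ᵀ * A = (crossMat L n)ᵀ * (momentMat L n)⁻¹ * crossMat L n := by
    rw [hA, ← Matrix.mul_assoc]
  have hAC : Aᵀ * crossMat L n = (crossMat L n)ᵀ * (momentMat L n)⁻¹ * crossMat L n := by
    rw [hAt]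
  have hAMA : Aᵀ * momentMat L n * A
      = (crossMat L n)ᵀ * (momentMat L n)⁻¹ * crossMat L n := by
    rw [hAt, Matrix.mul_assoc ((crossMat L n)ᵀ) ((momentMat L n)⁻¹) (momentMat L n),
      Matrix.nonsing_inv_mul _ (hdef n), Matrix.mul_one, hA, ← Matrix.mul_assoc]
  have hfirst : (Matrix.of fun b b' : ExactDeg d (n + 1) =>
      L (monicOP L n b * monicOP L n b')) =
      topMat L n - (crossMat L n)ᵀ * (momentMat L n)⁻¹ * crossMat L n := by
    rw [hgram, hCA, hAC, hAMA]
    abel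
  refine ⟨hfirst, ?_, ?_⟩
  · rw [Matrix.IsSymm]
    ext b b'
    simp only [Matrix.transpose_apply, Matrix.of_apply]
    rw [mul_comm]
  · haveI : Invertible (momentMat L n) := (momentMat L n).invertibleOfIsUnitDet (hdef n)
    have hdet : (momentMat L (n + 1)).det =
        (momentMat L n).det *
          (topMat L n - (crossMat L n)ᵀ * (momentMat L n)⁻¹ * crossMat L n).det := by
      rw [← Matrix.det_submatrix_equiv_self (splitEquiv d n), blocks_eq,
        Matrix.det_fromBlocks₁₁, Matrix.invOf_eq_nonsing_inv]
    rw [hfirst]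
    have := hdef (n + 1)
    rw [hdet] at this
    exact (IsUnit.mul_iff.mp this).2
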